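/- arXiv:1910.04472 — 2 statements merged into one kernel-verified Lean document; each statement's English description precedes it below -/
import Mathlib

section
/- Let q be a prime power, let Q ⊆ F_q^{k×n1} be a set of N3 matrices such that rank(A − B) ≥ d2 for all distinct A, B ∈ Q, and let U be an SC-representation of an (n2, N4, d1, k)_q constant dimension code. Then W2 = { rowspace(Q | U) : Q ∈ Q, U ∈ U } is an (n1 + n2, N3·N4, min{d1, 2·d2}, k)_q constant dimension code; in particular the N3·N4 row spaces rowspace(Q | U) are pairwise distinct and have pairwise subspace distance at least min{d1, 2·d2}. -/
open Module

/-- The row space of a matrix: the subspace spanned by its rows. -/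
noncomputable def rowSpace {F : Type*} [Field F] {k n : ℕ} (M : Matrix (Fin k) (Fin n) F) :
    Submodule F (Fin n → F) := LinearMap.range M.vecMulLinear

/-- The subspace distance `d_S(U, W) = dim(U + W) − dim(U ∩ W)`. -/
noncomputable def subspaceDist {F : Type*} [Field F] {n : ℕ}
    (U W : Submodule F (Fin n → F)) : ℕ :=
  finrank F ↥(U ⊔ W) - finrank F ↥(U ⊓ W)

/-- Horizontal concatenation `(A | B)` of two matrices with the same number of rows. -/
def hcat {F : Type*} {k n1 n2 : ℕ} (A : Matrix (Fin k) (Fin n1) F)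
    (B : Matrix (Fin k) (Fin n2) F) : Matrix (Fin k) (Fin (n1 + n2)) F :=
  Matrix.of fun i => Fin.append (A i) (B i)

/-- `S` is an SC-representation of an `(n, N, d, k)_q` constant dimension code: a set of `N`
full-rank `k×n` matrices whose row spaces are pairwise distinct and have pairwise subspace
distance at least `d`. -/
def IsSCRepOfCDC {F : Type*} [Field F] {k n : ℕ}
    (S : Finset (Matrix (Fin k) (Fin n) F)) (N d : ℕ) : Prop :=
  S.card = N ∧ (∀ M ∈ S, M.rank = k) ∧
  (∀ M1 ∈ S, ∀ M2 ∈ S, M1 ≠ M2 → rowSpace M1 ≠ rowSpace M2) ∧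
  (∀ M1 ∈ S, ∀ M2 ∈ S, M1 ≠ M2 → d ≤ subspaceDist (rowSpace M1) (rowSpace M2))

section Aux

variable {F : Type*} [Field F] {k n n1 n2 : ℕ}

lemma finrank_rowSpace_eq_rank (M : Matrix (Fin k) (Fin n) F) :
    finrank F ↥(rowSpace M) = M.rank := by
  rw [rowSpace, ← Matrix.mulVecLin_transpose, ← Matrix.rank, Matrix.rank_transpose]

lemma vecMulLinear_injective_of_rank (M : Matrix (Fin k) (Fin n) F) (h : M.rank = k) :
    Function.Injective M.vecMulLinear := by
  rw [← LinearMap.ker_eq_bot]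
  have h1 := LinearMap.finrank_range_add_finrank_ker M.vecMulLinear
  rw [← rowSpace, finrank_rowSpace_eq_rank, h] at h1
  simp only [Module.finrank_pi, Fintype.card_fin] at h1
  have : finrank F ↥(LinearMap.ker M.vecMulLinear) = 0 := by omega
  rwa [Submodule.finrank_eq_zero] at this

/-- Projection onto the right block of coordinates. -/
noncomputable def projR (F : Type*) [Field F] (n1 n2 : ℕ) :
    (Fin (n1 + n2) → F) →ₗ[F] (Fin n2 → F) :=
  LinearMap.funLeft F F (Fin.natAdd n1)

noncomputable def projL (F : Type*) [Field F] (n1 n2 : ℕ) :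
    (Fin (n1 + n2) → F) →ₗ[F] (Fin n1 → F) :=
  LinearMap.funLeft F F (Fin.castAdd n2)

lemma projR_vecMul (A : Matrix (Fin k) (Fin n1) F) (B : Matrix (Fin k) (Fin n2) F)
    (v : Fin k → F) : projR F n1 n2 ((hcat A B).vecMulLinear v) = B.vecMulLinear v := by
  funext j
  simp only [projR, LinearMap.funLeft_apply, Matrix.vecMulLinear_apply, Matrix.vecMul,
    dotProduct, hcat, Matrix.of_apply]
  simp [Fin.append_right]

lemma projL_vecMul (A : Matrix (Fin k) (Fin n1) F) (B : Matrix (Fin k) (Fin n2) F)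
    (v : Fin k → F) : projL F n1 n2 ((hcat A B).vecMulLinear v) = A.vecMulLinear v := by
  funext j
  simp only [projL, LinearMap.funLeft_apply, Matrix.vecMulLinear_apply, Matrix.vecMul,
    dotProduct, hcat, Matrix.of_apply]
  simp [Fin.append_left]

end Aux

section Cases

variable {F : Type*} [Field F] {k n n1 n2 : ℕ}

lemma hcat_vecMulLinear_apply (A : Matrix (Fin k) (Fin n1) F) (B : Matrix (Fin k) (Fin n2) F)
    (v : Fin k → F) :
    (hcat A B).vecMulLinear v = Fin.append (A.vecMulLinear v) (B.vecMulLinear v) := by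
  funext j
  simp only [Matrix.vecMulLinear_apply, Matrix.vecMul, dotProduct, hcat, Matrix.of_apply]
  refine Fin.addCases (fun j => ?_) (fun j => ?_) j <;>
    simp [Fin.append_left, Fin.append_right, Matrix.vecMul, dotProduct]

lemma dist_eq (W1 W2 : Submodule F (Fin n → F)) :
    subspaceDist W1 W2 = finrank F W1 + finrank F W2 - 2 * finrank F ↥(W1 ⊓ W2) := by
  have h := Submodule.finrank_sup_add_finrank_inf_eq W1 W2
  have h1 : finrank F ↥(W1 ⊓ W2) ≤ finrank F W1 := Submodule.finrank_mono inf_le_left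
  unfold subspaceDist; omega

lemma projR_comp (A : Matrix (Fin k) (Fin n1) F) (B : Matrix (Fin k) (Fin n2) F) :
    (projR F n1 n2).comp (hcat A B).vecMulLinear = B.vecMulLinear :=
  LinearMap.ext fun v => projR_vecMul A B v

lemma map_projR_rowSpace (A : Matrix (Fin k) (Fin n1) F) (B : Matrix (Fin k) (Fin n2) F) :
    Submodule.map (projR F n1 n2) (rowSpace (hcat A B)) = rowSpace B := by
  rw [rowSpace, rowSpace, ← LinearMap.range_comp, projR_comp]

lemma hcat_vecMulLinear_injective (A : Matrix (Fin k) (Fin n1) F)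
    (B : Matrix (Fin k) (Fin n2) F) (hB : B.rank = k) :
    Function.Injective (hcat A B).vecMulLinear := by
  have hBinj := vecMulLinear_injective_of_rank B hB
  intro v w h
  apply hBinj
  rw [← projR_vecMul A B v, ← projR_vecMul A B w, h]

lemma finrank_rowSpace_hcat (A : Matrix (Fin k) (Fin n1) F)
    (B : Matrix (Fin k) (Fin n2) F) (hB : B.rank = k) :
    finrank F ↥(rowSpace (hcat A B)) = k := by
  rw [rowSpace, LinearMap.finrank_range_of_inj (hcat_vecMulLinear_injective A B hB)]
  simp

lemma caseU (Q1 Q2 : Matrix (Fin k) (Fin n1) F) (U1 U2 : Matrix (Fin k) (Fin n2) F)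
    (hU1 : U1.rank = k) (hU2 : U2.rank = k) (hne : rowSpace U1 ≠ rowSpace U2) :
    rowSpace (hcat Q1 U1) ≠ rowSpace (hcat Q2 U2) ∧
      subspaceDist (rowSpace U1) (rowSpace U2) ≤
        subspaceDist (rowSpace (hcat Q1 U1)) (rowSpace (hcat Q2 U2)) := by
  set W1 := rowSpace (hcat Q1 U1)
  set W2 := rowSpace (hcat Q2 U2)
  set V1 := rowSpace U1
  set V2 := rowSpace U2
  have hm1 : Submodule.map (projR F n1 n2) W1 = V1 := map_projR_rowSpace Q1 U1
  have hm2 : Submodule.map (projR F n1 n2) W2 = V2 := map_projR_rowSpace Q2 U2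
  constructor
  · intro h
    exact hne (by rw [← hm1, ← hm2, h])
  · have hle : ∀ x ∈ W1 ⊓ W2, projR F n1 n2 x ∈ V1 ⊓ V2 := by
      intro x hx
      exact ⟨hm1 ▸ Submodule.mem_map_of_mem hx.1, hm2 ▸ Submodule.mem_map_of_mem hx.2⟩
    have hinj : Function.Injective ((projR F n1 n2).restrict hle) := by
      intro ⟨x, hx⟩ ⟨y, hy⟩ hxy
      have hxy' : projR F n1 n2 x = projR F n1 n2 y := by
        simpa [LinearMap.restrict_apply, Subtype.ext_iff] using hxy
      obtain ⟨v, rfl⟩ := hx.1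
      obtain ⟨w, rfl⟩ := hy.1
      rw [projR_vecMul, projR_vecMul] at hxy'
      have hvw := vecMulLinear_injective_of_rank U1 hU1 hxy'
      exact Subtype.ext (congrArg ((hcat Q1 U1).vecMulLinear) hvw)
    have hdim : finrank F ↥(W1 ⊓ W2) ≤ finrank F ↥(V1 ⊓ V2) :=
      LinearMap.finrank_le_finrank_of_injective hinj
    have hW1 : finrank F ↥W1 = k := finrank_rowSpace_hcat Q1 U1 hU1
    have hW2 : finrank F ↥W2 = k := finrank_rowSpace_hcat Q2 U2 hU2
    have hV1 : finrank F ↥V1 = k := (finrank_rowSpace_eq_rank U1).trans hU1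
    have hV2 : finrank F ↥V2 = k := (finrank_rowSpace_eq_rank U2).trans hU2
    have hVk : finrank F ↥(V1 ⊓ V2) ≤ k := hV1 ▸ Submodule.finrank_mono inf_le_left
    rw [dist_eq, dist_eq, hW1, hW2, hV1, hV2]
    omega

lemma caseQ (Q1 Q2 : Matrix (Fin k) (Fin n1) F) (U : Matrix (Fin k) (Fin n2) F)
    (hU : U.rank = k) (hne : Q1 ≠ Q2) :
    rowSpace (hcat Q1 U) ≠ rowSpace (hcat Q2 U) ∧
      2 * (Q1 - Q2).rank ≤ subspaceDist (rowSpace (hcat Q1 U)) (rowSpace (hcat Q2 U)) := by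
  set W1 := rowSpace (hcat Q1 U)
  set W2 := rowSpace (hcat Q2 U)
  set K := LinearMap.ker (Q1 - Q2).vecMulLinear with hK
  have hinj1 := hcat_vecMulLinear_injective Q1 U hU
  have hinter : W1 ⊓ W2 = Submodule.map (hcat Q1 U).vecMulLinear K := by
    apply le_antisymm
    · rintro x ⟨⟨v, rfl⟩, ⟨w, hw⟩⟩
      have hvw : v = w := by
        apply vecMulLinear_injective_of_rank U hU
        rw [← projR_vecMul Q1 U v, ← projR_vecMul Q2 U w, hw]
      subst hvw
      have hQ : Q2.vecMulLinear v = Q1.vecMulLinear v := by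
        rw [← projL_vecMul Q1 U v, ← projL_vecMul Q2 U v, hw]
      refine ⟨v, ?_, rfl⟩
      simp only [hK, SetLike.mem_coe, LinearMap.mem_ker, Matrix.vecMulLinear_apply,
        Matrix.vecMul_sub, sub_eq_zero]
      simpa [Matrix.vecMulLinear_apply] using hQ.symm
    · rintro x ⟨v, hv, rfl⟩
      have hv' : Matrix.vecMul v Q1 = Matrix.vecMul v Q2 := by
        have h0 : Matrix.vecMul v (Q1 - Q2) = 0 := hv
        rwa [Matrix.vecMul_sub, sub_eq_zero] at h0
      refine ⟨⟨v, rfl⟩, ⟨v, ?_⟩⟩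
      rw [hcat_vecMulLinear_apply, hcat_vecMulLinear_apply]
      simp only [Matrix.vecMulLinear_apply]
      rw [hv']
  have hrk : (Q1 - Q2).rank + finrank F ↥K = k := by
    have h := LinearMap.finrank_range_add_finrank_ker (Q1 - Q2).vecMulLinear
    rw [← rowSpace, finrank_rowSpace_eq_rank] at h
    simpa using h
  have hfin : finrank F ↥(W1 ⊓ W2) = finrank F ↥K := by
    rw [hinter]
    exact (Submodule.equivMapOfInjective _ hinj1 K).finrank_eq.symm
  have hW1 : finrank F ↥W1 = k := finrank_rowSpace_hcat Q1 U hU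
  have hW2 : finrank F ↥W2 = k := finrank_rowSpace_hcat Q2 U hU
  have hrpos : 1 ≤ (Q1 - Q2).rank := by
    by_contra h
    have h0 : (Q1 - Q2).rank = 0 := by omega
    rw [Matrix.rank, Submodule.finrank_eq_zero] at h0
    apply hne
    ext i j
    have hz := LinearMap.range_eq_bot.mp h0
    have h1 := congrFun (LinearMap.congr_fun hz (Pi.single j 1)) i
    simp only [Matrix.mulVecLin_apply, Matrix.mulVec_single, LinearMap.zero_apply,
      Pi.zero_apply] at h1
    have h2 : (Q1 - Q2) i j * 1 = 0 := h1
    have : Q1 i j - Q2 i j = 0 := by simpa using h2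
    exact sub_eq_zero.mp this
  constructor
  · intro h
    have heq : W1 ⊓ W2 = W1 := by rw [h, inf_idem]
    rw [heq] at hfin
    omega
  · rw [dist_eq, hW1, hW2, hfin]
    omega

end Cases


/-- The parallel linkage construction: from a rank-metric code `𝒬 ⊆ F_q^{k×n1}` of size `N3`
with minimum rank distance `d2` and an SC-representation `𝒰` of an `(n2, N4, d1, k)_q` CDC,
the set `W2 = { rowspace(Q | U) : Q ∈ 𝒬, U ∈ 𝒰 }` is an
`(n1 + n2, N3·N4, min{d1, 2·d2}, k)_q` constant dimension code. -/
theorem parallel_linkage_construction (q k n1 n2 N3 N4 d1 d2 : ℕ) (hq : IsPrimePow q)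
    (F : Type*) [Field F] [Fintype F] (hcard : Fintype.card F = q)
    (𝒬 : Finset (Matrix (Fin k) (Fin n1) F)) (h𝒬card : 𝒬.card = N3)
    (h𝒬dist : ∀ A ∈ 𝒬, ∀ B ∈ 𝒬, A ≠ B → d2 ≤ (A - B).rank)
    (𝒰 : Finset (Matrix (Fin k) (Fin n2) F)) (h𝒰 : IsSCRepOfCDC 𝒰 N4 d1) :
    (∀ Q ∈ 𝒬, ∀ U ∈ 𝒰, finrank F ↥(rowSpace (hcat Q U)) = k) ∧
    ((@Finset.image _ _ (Classical.decEq _)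
      (fun p : Matrix (Fin k) (Fin n1) F × Matrix (Fin k) (Fin n2) F =>
        rowSpace (hcat p.1 p.2)) (𝒬 ×ˢ 𝒰)).card = N3 * N4) ∧
    (∀ Q1 ∈ 𝒬, ∀ U1 ∈ 𝒰, ∀ Q2 ∈ 𝒬, ∀ U2 ∈ 𝒰, (Q1, U1) ≠ (Q2, U2) →
      rowSpace (hcat Q1 U1) ≠ rowSpace (hcat Q2 U2) ∧
      min d1 (2 * d2) ≤ subspaceDist (rowSpace (hcat Q1 U1)) (rowSpace (hcat Q2 U2))) := by
  obtain ⟨hUcard, hUrank, hUne, hUdist⟩ := h𝒰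
  have key : ∀ Q1 ∈ 𝒬, ∀ U1 ∈ 𝒰, ∀ Q2 ∈ 𝒬, ∀ U2 ∈ 𝒰, (Q1, U1) ≠ (Q2, U2) →
      rowSpace (hcat Q1 U1) ≠ rowSpace (hcat Q2 U2) ∧
      min d1 (2 * d2) ≤ subspaceDist (rowSpace (hcat Q1 U1)) (rowSpace (hcat Q2 U2)) := by
    intro Q1 hQ1 U1 hU1 Q2 hQ2 U2 hU2 hne
    by_cases hU : U1 = U2
    · subst hU
      have hQ : Q1 ≠ Q2 := fun h => hne (by rw [h])
      obtain ⟨h1, h2⟩ := caseQ Q1 Q2 U1 (hUrank U1 hU1) hQ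
      refine ⟨h1, le_trans (min_le_right _ _) (le_trans ?_ h2)⟩
      exact Nat.mul_le_mul_left 2 (h𝒬dist Q1 hQ1 Q2 hQ2 hQ)
    · obtain ⟨h1, h2⟩ := caseU Q1 Q2 U1 U2 (hUrank U1 hU1) (hUrank U2 hU2)
        (hUne U1 hU1 U2 hU2 hU)
      exact ⟨h1, le_trans (min_le_left _ _) (le_trans (hUdist U1 hU1 U2 hU2 hU) h2)⟩
  refine ⟨fun Q hQ U hU => finrank_rowSpace_hcat Q U (hUrank U hU), ?_, key⟩
  letI : DecidableEq (Submodule F (Fin (n1 + n2) → F)) := Classical.decEq _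
  rw [Finset.card_image_of_injOn, Finset.card_product, h𝒬card, hUcard]
  intro p hp q hq h
  simp only [Finset.mem_coe, Finset.mem_product] at hp hq
  by_contra hpq
  exact (key p.1 hp.1 p.2 hp.2 q.1 hq.1 q.2 hq.2 (by simpa using hpq)).1 h
end

section
/- Let F be a field and k, n1, n2, n1', n2' positive integers with n1' ≥ n1 and n1 + n2 = n1' + n2'. Let U11 ∈ F^{k×n1} with rank(U11) = k, Q12 ∈ F^{k×n2}, Q21 ∈ F^{k×n1'}, and U22 ∈ F^{k×n2'}. Let W1 = rowspace(U11 | Q12) and W2 = rowspace(Q21 | U22), both subspaces of F^{n1+n2}. Then dim(W1 ∩ W2) ≤ rank(Q21'), where Q21' ∈ F^{k×n1} is the submatrix of Q21 consisting of its first n1 columns; in particular dim(W1 ∩ W2) ≤ rank(Q21). -/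
open Module
open Matrix

lemma finrank_rowSpace {F : Type*} [Field F] {k n : ℕ} (M : Matrix (Fin k) (Fin n) F) :
    finrank F ↥(rowSpace M) = M.rank := by
  rw [rowSpace, ← Matrix.mulVecLin_transpose, ← Matrix.rank, Matrix.rank_transpose]

/-- If `U11 ∈ F^{k×n1}` has full rank `k`, `W1 = rowspace(U11 | Q12)` and
`W2 = rowspace(Q21 | U22)` (with `n1' ≥ n1` and `n1 + n2 = n1' + n2'`, both subspaces of
`F^{n1+n2}`), then `dim(W1 ∩ W2)` is at most the rank of the submatrix `Q21'` of `Q21`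
consisting of its first `n1` columns; in particular `dim(W1 ∩ W2) ≤ rank(Q21)`. -/
theorem dim_inter_le_rank_first_columns (F : Type*) [Field F]
    (k n1 n2 n1' n2' : ℕ) (hk : 0 < k) (hn1 : 0 < n1) (hn2 : 0 < n2)
    (hn1' : 0 < n1') (hn2' : 0 < n2') (h1 : n1 ≤ n1') (hsum : n1 + n2 = n1' + n2')
    (U11 : Matrix (Fin k) (Fin n1) F) (hU11 : U11.rank = k)
    (Q12 : Matrix (Fin k) (Fin n2) F)
    (Q21 : Matrix (Fin k) (Fin n1') F) (U22 : Matrix (Fin k) (Fin n2') F) :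
    finrank F ↥(rowSpace (hcat U11 Q12) ⊓
        rowSpace ((hcat Q21 U22).submatrix id (Fin.cast hsum))) ≤
      (Q21.submatrix id (Fin.castLE h1)).rank ∧
    finrank F ↥(rowSpace (hcat U11 Q12) ⊓
        rowSpace ((hcat Q21 U22).submatrix id (Fin.cast hsum))) ≤ Q21.rank := by
  set Q21' := Q21.submatrix id (Fin.castLE h1) with hQ21'
  -- projection onto first n1 coordinates
  set π : (Fin (n1 + n2) → F) →ₗ[F] (Fin n1 → F) :=
    LinearMap.funLeft F F (Fin.castAdd n2) with hπ
  have key1 : ∀ x : Fin k → F, π (Matrix.vecMul x (hcat U11 Q12)) = Matrix.vecMul x U11 := by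
    intro x; ext j
    simp [hπ, LinearMap.funLeft, Matrix.vecMul, dotProduct, hcat, Fin.append_left]
  have key2 : ∀ x : Fin k → F,
      π (Matrix.vecMul x ((hcat Q21 U22).submatrix id (Fin.cast hsum))) = Matrix.vecMul x Q21' := by
    intro x; ext j
    have hidx : Fin.cast hsum (Fin.castAdd n2 j) = Fin.castAdd n2' (Fin.castLE h1 j) := rfl
    simp [hπ, LinearMap.funLeft, Matrix.vecMul, dotProduct, hcat, Matrix.submatrix,
      hidx, Fin.append_left, hQ21']
  -- vecMulLinear U11 is injective
  have hinj : Function.Injective U11.vecMulLinear := by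
    rw [← Matrix.mulVecLin_transpose]
    rw [← LinearMap.ker_eq_bot]
    have hrn := LinearMap.finrank_range_add_finrank_ker (U11ᵀ.mulVecLin)
    rw [show finrank F (LinearMap.range U11ᵀ.mulVecLin) = U11ᵀ.rank from rfl,
      Matrix.rank_transpose, hU11] at hrn
    simp only [Module.finrank_fintype_fun_eq_card, Fintype.card_fin] at hrn
    have : finrank F (LinearMap.ker U11ᵀ.mulVecLin) = 0 := by omega
    exact Submodule.finrank_eq_zero.mp this
  set W := rowSpace (hcat U11 Q12) ⊓
      rowSpace ((hcat Q21 U22).submatrix id (Fin.cast hsum)) with hW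
  -- restriction of π to W is injective
  have hfi : Function.Injective (π.comp W.subtype) := by
    intro a b hab
    ext1
    obtain ⟨x, hx⟩ := a.2.1
    obtain ⟨y, hy⟩ := b.2.1
    have : π a.1 = π b.1 := hab
    rw [← hx, ← hy] at this ⊢
    simp only [Matrix.vecMulLinear_apply] at this ⊢
    rw [key1, key1] at this
    have hxy : x = y := hinj this
    rw [hxy]
  have hle : LinearMap.range (π.comp W.subtype) ≤ rowSpace Q21' := by
    rintro _ ⟨⟨v, hv⟩, rfl⟩
    obtain ⟨x, hx⟩ := hv.2
    simp only [Matrix.vecMulLinear_apply] at hx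
    exact ⟨x, by simp [← hx, key2]⟩
  have hmain : finrank F ↥W ≤ Q21'.rank := by
    rw [← LinearMap.finrank_range_of_inj hfi, ← finrank_rowSpace]
    exact Submodule.finrank_mono hle
  refine ⟨hmain, hmain.trans ?_⟩
  -- rank Q21' ≤ rank Q21
  rw [Matrix.rank_eq_finrank_span_cols, Matrix.rank_eq_finrank_span_cols]
  apply Submodule.finrank_mono
  apply Submodule.span_mono
  rintro _ ⟨j, rfl⟩
  exact ⟨Fin.castLE h1 j, rfl⟩
end
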